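/- Let E, A be n×n real matrices with a Weierstrass decomposition (Q, P, n₁, n₂, W, N). Then: (a) det(X·N − I_{n₂}) = (−1)^{n₂} as a polynomial in ℝ[X]; (b) the degree of the polynomial det(X·E − A) ∈ ℝ[X] equals n₁; (c) rank(E) = n₁ + rank(N); consequently rank(E) = deg(det(X·E − A)) if and only if N = 0, i.e. the pair (E,A) is impulse-free exactly when the nilpotent block of the Weierstrass form vanishes. -/

import Mathlib

open Matrix Polynomial

/-- Range of a product map. -/
lemma aux_range_prodMap {R M M₂ M₃ M₄ : Type*} [CommSemiring R]
    [AddCommMonoid M] [AddCommMonoid M₂] [AddCommMonoid M₃] [AddCommMonoid M₄]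
    [Module R M] [Module R M₂] [Module R M₃] [Module R M₄]
    (f : M →ₗ[R] M₂) (g : M₃ →ₗ[R] M₄) :
    LinearMap.range (f.prodMap g) = (LinearMap.range f).prod (LinearMap.range g) := by
  ext ⟨x, y⟩
  simp only [LinearMap.mem_range, LinearMap.prodMap_apply, Submodule.mem_prod, Prod.ext_iff]
  constructor
  · rintro ⟨⟨a, b⟩, h⟩
    exact ⟨⟨a, h.1⟩, ⟨b, h.2⟩⟩
  · rintro ⟨⟨a, ha⟩, ⟨b, hb⟩⟩
    exact ⟨(a, b), ha, hb⟩

/-- finrank of a product of submodules. -/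
lemma aux_finrank_prod {M M' : Type*} [AddCommGroup M] [AddCommGroup M']
    [Module ℝ M] [Module ℝ M'] (p : Submodule ℝ M) (q : Submodule ℝ M')
    [FiniteDimensional ℝ p] [FiniteDimensional ℝ q] :
    Module.finrank ℝ (p.prod q) = Module.finrank ℝ p + Module.finrank ℝ q := by
  have h : LinearMap.range (p.subtype.prodMap q.subtype) = p.prod q := by
    rw [aux_range_prodMap, Submodule.range_subtype, Submodule.range_subtype]
  have hinj : Function.Injective (p.subtype.prodMap q.subtype) := by
    apply LinearMap.ker_eq_bot.mp
    rw [LinearMap.ker_prodMap, Submodule.ker_subtype, Submodule.ker_subtype,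
      Submodule.prod_bot]
  rw [← h, LinearMap.finrank_range_of_inj hinj, Module.finrank_prod]

/-- Rank of a block-diagonal matrix over `ℝ`. -/
lemma aux_rank_fromBlocks_diag {n₁ n₂ : ℕ} (B : Matrix (Fin n₁) (Fin n₁) ℝ)
    (D : Matrix (Fin n₂) (Fin n₂) ℝ) :
    (Matrix.fromBlocks B 0 0 D).rank = B.rank + D.rank := by
  classical
  let b₁ := Pi.basisFun ℝ (Fin n₁)
  let b₂ := Pi.basisFun ℝ (Fin n₂)
  have hB : Matrix.fromBlocks B 0 0 D
      = LinearMap.toMatrix (b₁.prod b₂) (b₁.prod b₂)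
        ((Matrix.toLin b₁ b₁ B).prodMap (Matrix.toLin b₂ b₂ D)) := by
    rw [LinearMap.toMatrix_prodMap, LinearMap.toMatrix_toLin, LinearMap.toMatrix_toLin]
  rw [Matrix.rank_eq_finrank_range_toLin _ (b₁.prod b₂) (b₁.prod b₂),
    Matrix.rank_eq_finrank_range_toLin B b₁ b₁,
    Matrix.rank_eq_finrank_range_toLin D b₂ b₂, hB, Matrix.toLin_toMatrix,
    aux_range_prodMap, aux_finrank_prod]

/-- A real matrix has rank zero iff it is zero. -/
lemma aux_rank_eq_zero_iff {k : ℕ} (A : Matrix (Fin k) (Fin k) ℝ) :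
    A.rank = 0 ↔ A = 0 := by
  constructor
  · intro h
    have hr : LinearMap.range A.mulVecLin = ⊥ := by
      rw [Matrix.rank] at h
      exact Submodule.finrank_eq_zero.mp h
    have h0 : A.mulVecLin = 0 := LinearMap.range_eq_bot.mp hr
    ext i j
    have := congrFun (congrArg (fun f => f (Pi.single j 1)) (congrArg DFunLike.coe h0)) i
    simpa [Matrix.mulVecLin_apply, Matrix.mulVec_single] using this
  · rintro rfl
    simp

lemma aux_fromBlocks_sub {l m o p α : Type*} [Sub α]
    (A : Matrix l m α) (B : Matrix l o α) (C : Matrix p m α) (D : Matrix p o α)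
    (A' : Matrix l m α) (B' : Matrix l o α) (C' : Matrix p m α) (D' : Matrix p o α) :
    Matrix.fromBlocks A B C D - Matrix.fromBlocks A' B' C' D'
      = Matrix.fromBlocks (A - A') (B - B') (C - C') (D - D') := by
  ext (i | i) (j | j) <;> simp

/-- The canonical identification of `Fin n` with `Fin n₁ ⊕ Fin n₂` when `n₁ + n₂ = n`. -/
def blockEquiv {n₁ n₂ n : ℕ} (h : n₁ + n₂ = n) : Fin n ≃ (Fin n₁ ⊕ Fin n₂) :=
  (finCongr h.symm).trans finSumFinEquiv.symm

/-- Characterization of the impulse-free property through the Weierstrass canonical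
form (Assumption 2 and Lemma 1). -/
theorem impulse_free_iff_nilpotent_block_zero
    (n n₁ n₂ : ℕ) (hn : n₁ + n₂ = n)
    (E A Q P : Matrix (Fin n) (Fin n) ℝ)
    (W : Matrix (Fin n₁) (Fin n₁) ℝ) (N : Matrix (Fin n₂) (Fin n₂) ℝ)
    (hQ : IsUnit Q) (hP : IsUnit P) (hN : IsNilpotent N)
    (hE : Matrix.reindex (blockEquiv hn) (blockEquiv hn) (Q * E * P)
        = Matrix.fromBlocks 1 0 0 N)
    (hA : Matrix.reindex (blockEquiv hn) (blockEquiv hn) (Q * A * P)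
        = Matrix.fromBlocks W 0 0 1) :
    Matrix.det ((Polynomial.X : Polynomial ℝ) • N.map Polynomial.C - 1)
        = (-1 : Polynomial ℝ) ^ n₂ ∧
    (Matrix.det ((Polynomial.X : Polynomial ℝ) • E.map Polynomial.C
        - A.map Polynomial.C)).natDegree = n₁ ∧
    E.rank = n₁ + N.rank ∧
    (E.rank = (Matrix.det ((Polynomial.X : Polynomial ℝ) • E.map Polynomial.C
        - A.map Polynomial.C)).natDegree ↔ N = 0) := by
  classical
  set e := blockEquiv hn with he
  -- Part (a)
  set M : Matrix (Fin n₂) (Fin n₂) (Polynomial ℝ) :=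
    (Polynomial.X : Polynomial ℝ) • N.map Polynomial.C with hM
  have hnil : IsNilpotent M := by
    obtain ⟨k, hk⟩ := hN
    refine ⟨k, ?_⟩
    rw [hM, _root_.smul_pow]
    have hpow : (N.map (Polynomial.C : ℝ →+* Polynomial ℝ)) ^ k
        = (N ^ k).map Polynomial.C := by
      simp [← RingHom.mapMatrix_apply, ← map_pow]
    rw [hpow, hk]
    simp
  have hu1 : IsUnit (1 - M) := hnil.isUnit_one_sub
  have hud : IsUnit (Matrix.det (1 - M)) := (Matrix.isUnit_iff_isUnit_det _).mp hu1
  have heval : Polynomial.eval 0 (Matrix.det (1 - M)) = 1 := by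
    rw [← Polynomial.coe_evalRingHom, RingHom.map_det]
    have hmap : ((Polynomial.evalRingHom 0).mapMatrix (1 - M) : Matrix (Fin n₂) (Fin n₂) ℝ) = 1 := by
      rw [RingHom.mapMatrix_apply]
      ext i j
      by_cases hij : i = j <;>
        simp [hM, Matrix.map_apply, Matrix.sub_apply, Matrix.smul_apply,
          Matrix.one_apply, hij]
    rw [hmap, Matrix.det_one]
  have hdet1M : Matrix.det (1 - M) = 1 := by
    have hdeg := Polynomial.isUnit_iff_degree_eq_zero.mp hud
    have hC := Polynomial.eq_C_of_degree_le_zero hdeg.le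
    rw [hC] at heval ⊢
    rw [Polynomial.eval_C] at heval
    rw [heval, Polynomial.C_1]
  have parta : Matrix.det (M - 1) = (-1 : Polynomial ℝ) ^ n₂ := by
    have : M - 1 = -(1 - M) := by rw [neg_sub]
    rw [this, Matrix.det_neg, hdet1M, Fintype.card_fin, mul_one]
  -- Part (b)
  have hQd : IsUnit Q.det := (Matrix.isUnit_iff_isUnit_det Q).mp hQ
  have hPd : IsUnit P.det := (Matrix.isUnit_iff_isUnit_det P).mp hP
  set D : Matrix (Fin n) (Fin n) (Polynomial ℝ) :=
    (Polynomial.X : Polynomial ℝ) • E.map Polynomial.C - A.map Polynomial.C with hD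
  have mm : ∀ Z : Matrix (Fin n) (Fin n) ℝ,
      (Q * Z * P).map (Polynomial.C : ℝ →+* Polynomial ℝ)
        = Q.map Polynomial.C * Z.map Polynomial.C * P.map Polynomial.C := by
    intro Z
    simp [Matrix.map_mul]
  have h1 : Q.map (Polynomial.C : ℝ →+* Polynomial ℝ) * D * P.map Polynomial.C
      = (Polynomial.X : Polynomial ℝ) • (Q * E * P).map Polynomial.C
        - (Q * A * P).map Polynomial.C := by
    rw [mm, mm, hD]
    simp only [Matrix.mul_sub, Matrix.sub_mul, Matrix.mul_smul, Matrix.smul_mul]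
  have h3 : Matrix.det ((Polynomial.X : Polynomial ℝ) • (Q * E * P).map Polynomial.C
      - (Q * A * P).map Polynomial.C) = W.charpoly * (-1 : Polynomial ℝ) ^ n₂ := by
    rw [← Matrix.det_reindex_self e]
    have h4 : Matrix.reindex e e ((Polynomial.X : Polynomial ℝ) • (Q * E * P).map Polynomial.C
        - (Q * A * P).map Polynomial.C)
        = Matrix.fromBlocks
            ((Polynomial.X : Polynomial ℝ) • (1 : Matrix (Fin n₁) (Fin n₁) (Polynomial ℝ))
              - W.map Polynomial.C) 0 0 (M - 1) := by
      have h5 : Matrix.reindex e e ((Q * E * P).map (Polynomial.C : ℝ →+* Polynomial ℝ))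
          = (Matrix.fromBlocks 1 0 0 N).map Polynomial.C := by
        rw [← hE, Matrix.reindex_apply, Matrix.reindex_apply, Matrix.submatrix_map]
      have h6 : Matrix.reindex e e ((Q * A * P).map (Polynomial.C : ℝ →+* Polynomial ℝ))
          = (Matrix.fromBlocks W 0 0 1).map Polynomial.C := by
        rw [← hA, Matrix.reindex_apply, Matrix.reindex_apply, Matrix.submatrix_map]
      have h7 : Matrix.reindex e e ((Polynomial.X : Polynomial ℝ) •
            (Q * E * P).map Polynomial.C - (Q * A * P).map Polynomial.C)
          = (Polynomial.X : Polynomial ℝ) •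
              Matrix.reindex e e ((Q * E * P).map Polynomial.C)
            - Matrix.reindex e e ((Q * A * P).map Polynomial.C) := by
        simp [Matrix.reindex_apply, Matrix.submatrix_sub, Matrix.submatrix_smul]
      rw [h7, h5, h6, Matrix.fromBlocks_map, Matrix.fromBlocks_map, Matrix.fromBlocks_smul,
        aux_fromBlocks_sub]
      congr 1 <;> simp [hM]
    rw [h4, Matrix.det_fromBlocks_zero₂₁, parta]
    congr 1
    have hch : (Polynomial.X : Polynomial ℝ) • (1 : Matrix (Fin n₁) (Fin n₁) (Polynomial ℝ))
        - W.map Polynomial.C = Matrix.charmatrix W := by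
      rw [Matrix.smul_one_eq_diagonal]
      simp [Matrix.charmatrix, Matrix.scalar_apply]
    rw [hch]
    rfl
  have hdet : Polynomial.C Q.det * Matrix.det D * Polynomial.C P.det
      = W.charpoly * (-1 : Polynomial ℝ) ^ n₂ := by
    have h2 := congrArg Matrix.det h1
    rw [Matrix.det_mul, Matrix.det_mul] at h2
    calc Polynomial.C Q.det * Matrix.det D * Polynomial.C P.det
        = (Q.map Polynomial.C).det * Matrix.det D * (P.map Polynomial.C).det := by
          rw [RingHom.map_det, RingHom.map_det, RingHom.mapMatrix_apply, RingHom.mapMatrix_apply]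
      _ = W.charpoly * (-1 : Polynomial ℝ) ^ n₂ := by rw [h2, h3]
  have key : Polynomial.C (Q.det * P.det) * Matrix.det D
      = W.charpoly * (-1 : Polynomial ℝ) ^ n₂ := by
    rw [_root_.map_mul]
    linear_combination hdet
  have partb : (Matrix.det D).natDegree = n₁ := by
    have h6 : (Polynomial.C (Q.det * P.det) * Matrix.det D).natDegree
        = (Matrix.det D).natDegree :=
      Polynomial.natDegree_C_mul (mul_ne_zero hQd.ne_zero hPd.ne_zero)
    rw [← h6, key, Polynomial.natDegree_mul (W.charpoly_monic.ne_zero)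
      (pow_ne_zero _ (neg_ne_zero.mpr one_ne_zero))]
    simp [Matrix.charpoly_natDegree_eq_dim]
  -- Part (c)
  have partc : E.rank = n₁ + N.rank := by
    have h7 : (Q * E * P).rank = E.rank := by
      rw [Matrix.rank_mul_eq_left_of_isUnit_det P (Q * E) hPd,
        Matrix.rank_mul_eq_right_of_isUnit_det Q E hQd]
    have h8 := congrArg Matrix.rank hE
    rw [Matrix.rank_reindex, h7, aux_rank_fromBlocks_diag, Matrix.rank_one,
      Fintype.card_fin] at h8
    exact h8
  refine ⟨parta, partb, partc, ?_⟩
  rw [partb, partc]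
  rw [Nat.add_eq_left, aux_rank_eq_zero_iff]
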